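/- Let G be a connected cubic graph obtained from a 2-edge-connected cubic graph H on n vertices by inflating every vertex of H to a triangle and replacing each edge of H (not on a vertex-triangle) with a string of diamonds of arbitrary length. Let X be the set of edges of G not lying on any triangle. Then the number of cyclically odd components of G − X is n, and ec(G − X) − |X| = −3n/2, where ec counts components with even Betti number. -/

import Mathlib

open SimpleGraph Finset

/-- Data witnessing that the cubic graph `G` is obtained from the cubic graph `H` by
inflating every vertex of `H` to a triangle and replacing each edge `e` of `H` by a
string of `k e` diamonds: `tri u` is the vertex-triangle at `u`, `dia e i`
(for `i < k e`) are the diamonds of the string at `e`, and `cross e` are the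
`k e + 1` connecting edges of the string at `e`. -/
structure DiamondInflation {VH VG : Type*} [Fintype VH] [Fintype VG]
    [DecidableEq VH] [DecidableEq VG]
    (H : SimpleGraph VH) (G : SimpleGraph VG) (k : Sym2 VH → ℕ) where
  tri : VH → Finset VG
  dia : Sym2 VH → ℕ → Finset VG
  cross : Sym2 VH → Finset (Sym2 VG)
  tri_card : ∀ u, (tri u).card = 3
  tri_adj : ∀ u, ∀ x ∈ tri u, ∀ y ∈ tri u, x ≠ y → G.Adj x y
  dia_card : ∀ e ∈ H.edgeSet, ∀ i < k e, (dia e i).card = 4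
  dia_edges : ∀ e ∈ H.edgeSet, ∀ i < k e,
    {f | f ∈ G.edgeSet ∧ ∀ v ∈ f, v ∈ (↑(dia e i) : Set VG)}.ncard = 5
  pieces_cover : ∀ x : VG,
    (∃ u, x ∈ tri u) ∨ (∃ e ∈ H.edgeSet, ∃ i < k e, x ∈ dia e i)
  tri_disj : ∀ u u', u ≠ u' → Disjoint (tri u) (tri u')
  dia_disj : ∀ e ∈ H.edgeSet, ∀ e' ∈ H.edgeSet, ∀ i < k e, ∀ j < k e',
    (e ≠ e' ∨ i ≠ j) → Disjoint (dia e i) (dia e' j)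
  tri_dia_disj : ∀ u, ∀ e ∈ H.edgeSet, ∀ i < k e, Disjoint (tri u) (dia e i)
  cross_card : ∀ e ∈ H.edgeSet, (cross e).card = k e + 1
  cross_sub : ∀ e ∈ H.edgeSet, (↑(cross e) : Set (Sym2 VG)) ⊆ G.edgeSet
  cross_ends : ∀ e ∈ H.edgeSet, ∀ f ∈ cross e, ∀ v ∈ f,
    (∃ u ∈ e, v ∈ tri u) ∨ (∃ i < k e, v ∈ dia e i)
  edge_classify : ∀ f ∈ G.edgeSet,
    (∃ u, ∀ v ∈ f, v ∈ tri u) ∨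
    (∃ e ∈ H.edgeSet, ∃ i < k e, ∀ v ∈ f, v ∈ dia e i) ∨
    (∃! e, e ∈ H.edgeSet ∧ f ∈ cross e)

/-- The Betti number (`|E| − |V| + 1`) of the connected component `c` of `Gr`. -/
noncomputable def compBetti {V : Type*} (Gr : SimpleGraph V)
    (c : Gr.ConnectedComponent) : ℤ :=
  ({e | e ∈ Gr.edgeSet ∧ ∀ v ∈ e, Gr.connectedComponentMk v = c}.ncard : ℤ)
    - c.supp.ncard + 1


section Aux
variable {VG : Type*} [Fintype VG] [DecidableEq VG]

lemma pair_set_eq (G : SimpleGraph VG) [DecidableRel G.Adj] (S : Finset VG) :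
    {f | f ∈ G.edgeSet ∧ ∀ v ∈ f, v ∈ (↑S : Set VG)} =
      ↑((S.offDiag.image Sym2.mk.uncurry).filter (· ∈ G.edgeSet)) := by
  ext f
  induction f with
  | _ x y =>
    simp only [Set.mem_setOf_eq, coe_filter, mem_image, mem_offDiag, Sym2.mem_iff,
      SimpleGraph.mem_edgeSet, mem_coe]
    constructor
    · rintro ⟨ha, hb⟩
      exact ⟨⟨(x, y), ⟨hb x (Or.inl rfl), hb y (Or.inr rfl), ha.ne⟩, rfl⟩, ha⟩
    · rintro ⟨⟨⟨u, v⟩, ⟨hu, hv, huv⟩, h⟩, ha⟩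
      refine ⟨ha, ?_⟩
      rintro w (rfl | rfl)
      · rcases Sym2.eq_iff.mp h with ⟨rfl, rfl⟩ | ⟨rfl, rfl⟩ <;> assumption
      · rcases Sym2.eq_iff.mp h with ⟨rfl, rfl⟩ | ⟨rfl, rfl⟩ <;> assumption

lemma diamond_struct (G : SimpleGraph VG) [DecidableRel G.Adj] (S : Finset VG) (hS : S.card = 4)
    (hE : {f | f ∈ G.edgeSet ∧ ∀ v ∈ f, v ∈ (↑S : Set VG)}.ncard = 5) :
    (∀ a ∈ S, ∀ b ∈ S, G.Adj a b → ∃ z ∈ S, G.Adj a z ∧ G.Adj b z) ∧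
    (∀ a ∈ S, 2 ≤ (S.filter (fun b => G.Adj a b)).card) ∧
    (∀ a ∈ S, ∀ b ∈ S, a ≠ b → G.Adj a b ∨ ∃ z ∈ S, G.Adj a z ∧ G.Adj z b) := by
  set P : Finset (Sym2 VG) := S.offDiag.image Sym2.mk.uncurry with hP
  set F : Finset (Sym2 VG) := P.filter (· ∈ G.edgeSet) with hF
  have hPcard : P.card = 6 := by
    rw [hP, Sym2.card_image_offDiag, hS]; decide
  have hFcard : F.card = 5 := by
    rw [← Set.ncard_coe_finset, ← pair_set_eq, hE]
  have hFP : F ⊆ P := filter_subset _ _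
  have hdiff : (P \ F).card = 1 := by
    rw [card_sdiff_of_subset hFP, hPcard, hFcard]
  have star : ∀ x ∈ S, ∀ y ∈ S, x ≠ y → ¬ G.Adj x y →
      ∀ z ∈ S, ∀ w ∈ S, z ≠ w → ¬ G.Adj z w → s(x, y) = s(z, w) := by
    intro x hx y hy hxy hnxy z hz w hw hzw hnzw
    have h1 : s(x, y) ∈ P \ F := by
      rw [mem_sdiff]
      constructor
      · exact mem_image.mpr ⟨(x, y), mem_offDiag.mpr ⟨hx, hy, hxy⟩, rfl⟩
      · rw [hF, mem_filter]
        rintro ⟨-, h⟩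
        exact hnxy (G.mem_edgeSet.mp h)
    have h2 : s(z, w) ∈ P \ F := by
      rw [mem_sdiff]
      constructor
      · exact mem_image.mpr ⟨(z, w), mem_offDiag.mpr ⟨hz, hw, hzw⟩, rfl⟩
      · rw [hF, mem_filter]
        rintro ⟨-, h⟩
        exact hnzw (G.mem_edgeSet.mp h)
    exact Finset.card_le_one.mp (le_of_eq hdiff) _ h1 _ h2
  refine ⟨?_, ?_, ?_⟩
  · -- every edge inside S lies on a triangle inside S
    intro a ha b hb hab
    by_contra hcon
    push_neg at hcon
    have hTne : ((S.erase a).erase b).card = 2 := by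
      rw [card_erase_of_mem, card_erase_of_mem ha, hS]
      exact mem_erase.mpr ⟨(Ne.symm hab.ne), hb⟩
    obtain ⟨c, hc, d, hd, hcd⟩ := Finset.one_lt_card.mp (by omega : 1 < ((S.erase a).erase b).card)
    obtain ⟨hcb, hca, hcS⟩ : c ≠ b ∧ c ≠ a ∧ c ∈ S := by
      rcases mem_erase.mp hc with ⟨h1, h2⟩; rcases mem_erase.mp h2 with ⟨h3, h4⟩; exact ⟨h1, h3, h4⟩
    obtain ⟨hdb, hda, hdS⟩ : d ≠ b ∧ d ≠ a ∧ d ∈ S := by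
      rcases mem_erase.mp hd with ⟨h1, h2⟩; rcases mem_erase.mp h2 with ⟨h3, h4⟩; exact ⟨h1, h3, h4⟩
    have hc' := hcon c hcS
    have hd' := hcon d hdS
    have key : ∀ u ∈ ({a, b} : Finset VG), ∀ v ∈ ({a, b} : Finset VG),
        ¬ G.Adj u c → ¬ G.Adj v d → False := by
      intro u hu v hv h1 h2
      have huS : u ∈ S := by rcases mem_insert.mp hu with rfl | h; exact ha; rw [mem_singleton.mp h]; exact hb
      have hvS : v ∈ S := by rcases mem_insert.mp hv with rfl | h; exact ha; rw [mem_singleton.mp h]; exact hb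
      have huc : u ≠ c := by rintro rfl; rcases mem_insert.mp hu with rfl | h; exact hca rfl; exact hcb (mem_singleton.mp h)
      have hvd : v ≠ d := by rintro rfl; rcases mem_insert.mp hv with rfl | h; exact hda rfl; exact hdb (mem_singleton.mp h)
      have := star u huS c hcS huc h1 v hvS d hdS hvd h2
      rcases Sym2.eq_iff.mp this with ⟨rfl, rfl⟩ | ⟨rfl, rfl⟩
      · exact hcd rfl
      · rcases mem_insert.mp hv with rfl | h
        · exact hca rfl
        · exact hcb (mem_singleton.mp h)
    have hma : a ∈ ({a, b} : Finset VG) := mem_insert_self _ _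
    have hmb : b ∈ ({a, b} : Finset VG) := mem_insert_of_mem (mem_singleton_self _)
    rcases Classical.em (G.Adj a c) with hac | hac <;> rcases Classical.em (G.Adj a d) with had | had
    · exact key b hmb b hmb (hc' hac) (hd' had)
    · exact key b hmb a hma (hc' hac) had
    · exact key a hma b hmb hac (hd' had)
    · exact key a hma a hma hac had
  · -- min internal degree 2
    intro a ha
    have hN : ((S.erase a).filter (fun b => ¬ G.Adj a b)).card ≤ 1 := by
      rw [Finset.card_le_one]
      intro b hb c hc
      rw [mem_filter, mem_erase] at hb hc
      have := star a ha b hb.1.2 (Ne.symm hb.1.1) hb.2 a ha c hc.1.2 (Ne.symm hc.1.1) hc.2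
      rcases Sym2.eq_iff.mp this with ⟨-, h⟩ | ⟨rfl, rfl⟩
      · exact h
      · rfl
    have hsplit := Finset.card_filter_add_card_filter_not
      (s := S.erase a) (p := fun b => G.Adj a b)
    have hEr : (S.erase a).card = 3 := by rw [card_erase_of_mem ha, hS]
    have hsub : (S.erase a).filter (fun b => G.Adj a b) ⊆ S.filter (fun b => G.Adj a b) :=
      filter_subset_filter _ (erase_subset _ _)
    have := Finset.card_le_card hsub
    omega
  · -- connectivity within S
    intro a ha b hb hab
    by_cases h : G.Adj a b
    · exact Or.inl h
    right
    have hTne : ((S.erase a).erase b).card = 2 := by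
      rw [card_erase_of_mem, card_erase_of_mem ha, hS]
      exact mem_erase.mpr ⟨Ne.symm hab, hb⟩
    obtain ⟨z, hz⟩ := Finset.card_pos.mp (by omega : 0 < ((S.erase a).erase b).card)
    obtain ⟨hzb, hza, hzS⟩ : z ≠ b ∧ z ≠ a ∧ z ∈ S := by
      rcases mem_erase.mp hz with ⟨h1, h2⟩; rcases mem_erase.mp h2 with ⟨h3, h4⟩; exact ⟨h1, h3, h4⟩
    refine ⟨z, hzS, ?_, ?_⟩
    · by_contra haz
      have := star a ha z hzS (Ne.symm hza) haz a ha b hb hab h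
      rcases Sym2.eq_iff.mp this with ⟨-, h'⟩ | ⟨rfl, rfl⟩
      · exact hzb h'
      · exact hzb rfl
    · by_contra hzb'
      have := star z hzS b hb hzb hzb' a ha b hb hab h
      rcases Sym2.eq_iff.mp this with ⟨h', -⟩ | ⟨rfl, rfl⟩
      · exact hza h'
      · exact hab rfl
end Aux


section Main
variable {VH VG : Type*} [Fintype VH] [Fintype VG] [DecidableEq VH] [DecidableEq VG]
  {H : SimpleGraph VH} {G : SimpleGraph VG} [DecidableRel G.Adj] {k : Sym2 VH → ℕ}

/-- A piece of the inflation: a vertex-triangle or a diamond. -/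
def DiamondInflation.IsPiece (D : DiamondInflation H G k) (S : Finset VG) : Prop :=
  (∃ u, S = D.tri u) ∨ (∃ e ∈ H.edgeSet, ∃ i < k e, S = D.dia e i)

namespace DiamondInflation
variable (D : DiamondInflation H G k)

lemma exists_piece (x : VG) : ∃ S, D.IsPiece S ∧ x ∈ S := by
  rcases D.pieces_cover x with ⟨u, hu⟩ | ⟨e, he, i, hi, hd⟩
  · exact ⟨D.tri u, Or.inl ⟨u, rfl⟩, hu⟩
  · exact ⟨D.dia e i, Or.inr ⟨e, he, i, hi, rfl⟩, hd⟩

lemma piece_eq_of_mem {S S' : Finset VG} {x : VG} (hS : D.IsPiece S) (hS' : D.IsPiece S')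
    (hx : x ∈ S) (hx' : x ∈ S') : S = S' := by
  rcases hS with ⟨u, rfl⟩ | ⟨e, he, i, hi, rfl⟩ <;>
    rcases hS' with ⟨u', rfl⟩ | ⟨e', he', i', hi', rfl⟩
  · by_contra h
    exact Finset.disjoint_left.mp (D.tri_disj u u' (fun huu => h (by rw [huu]))) hx hx'
  · exact absurd hx' (Finset.disjoint_left.mp (D.tri_dia_disj u e' he' i' hi') hx)
  · exact absurd hx (Finset.disjoint_left.mp (D.tri_dia_disj u' e he i hi) hx')
  · by_contra h
    refine Finset.disjoint_left.mp (D.dia_disj e he e' he' i hi i' hi' ?_) hx hx'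
    by_contra h'
    push_neg at h'
    exact h (by rw [h'.1, h'.2])

lemma piece_edge_triangle {S : Finset VG} (hS : D.IsPiece S) {a b : VG} (ha : a ∈ S) (hb : b ∈ S)
    (hab : G.Adj a b) : ∃ z ∈ S, G.Adj a z ∧ G.Adj b z := by
  rcases hS with ⟨u, rfl⟩ | ⟨e, he, i, hi, rfl⟩
  · have h2 : (((D.tri u).erase a).erase b).card = 1 := by
      rw [card_erase_of_mem (mem_erase.mpr ⟨Ne.symm hab.ne, hb⟩), card_erase_of_mem ha, D.tri_card]
    obtain ⟨z, hz⟩ := Finset.card_pos.mp (by omega : 0 < (((D.tri u).erase a).erase b).card)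
    obtain ⟨hzb, hza, hzS⟩ : z ≠ b ∧ z ≠ a ∧ z ∈ D.tri u := by
      rcases mem_erase.mp hz with ⟨h1, h2⟩; rcases mem_erase.mp h2 with ⟨h3, h4⟩; exact ⟨h1, h3, h4⟩
    exact ⟨z, hzS, (D.tri_adj u a ha z hzS (Ne.symm hza)), (D.tri_adj u b hb z hzS (Ne.symm hzb))⟩
  · exact (diamond_struct G _ (D.dia_card e he i hi) (D.dia_edges e he i hi)).1 a ha b hb hab

lemma piece_mindeg {S : Finset VG} (hS : D.IsPiece S) {a : VG} (ha : a ∈ S) :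
    2 ≤ (S.filter (fun b => G.Adj a b)).card := by
  rcases hS with ⟨u, rfl⟩ | ⟨e, he, i, hi, rfl⟩
  · have hsub : (D.tri u).erase a ⊆ (D.tri u).filter (fun b => G.Adj a b) := by
      intro b hb
      rcases mem_erase.mp hb with ⟨hba, hbS⟩
      exact mem_filter.mpr ⟨hbS, D.tri_adj u a ha b hbS (Ne.symm hba)⟩
    calc 2 = ((D.tri u).erase a).card := by rw [card_erase_of_mem ha, D.tri_card]
    _ ≤ _ := Finset.card_le_card hsub
  · exact (diamond_struct G _ (D.dia_card e he i hi) (D.dia_edges e he i hi)).2.1 a ha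

lemma piece_conn {S : Finset VG} (hS : D.IsPiece S) {a b : VG} (ha : a ∈ S) (hb : b ∈ S)
    (hab : a ≠ b) : G.Adj a b ∨ ∃ z ∈ S, G.Adj a z ∧ G.Adj z b := by
  rcases hS with ⟨u, rfl⟩ | ⟨e, he, i, hi, rfl⟩
  · exact Or.inl (D.tri_adj u a ha b hb hab)
  · exact (diamond_struct G _ (D.dia_card e he i hi) (D.dia_edges e he i hi)).2.2 a ha b hb hab

lemma ext_unique (hG3 : ∀ v, G.degree v = 3) {S : Finset VG} (hS : D.IsPiece S) {a : VG}
    (ha : a ∈ S) {y z : VG} (hy : y ∉ S) (hz : z ∉ S) (hay : G.Adj a y) (haz : G.Adj a z) :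
    y = z := by
  by_contra hyz
  have hdeg : (G.neighborFinset a).card = 3 := by rw [card_neighborFinset_eq_degree, hG3]
  have h1 : ((G.neighborFinset a).filter (· ∈ S)).card ≥ 2 := by
    have : S.filter (fun b => G.Adj a b) = (G.neighborFinset a).filter (· ∈ S) := by
      ext b; simp only [mem_filter, mem_neighborFinset]; tauto
    rw [← this]; exact D.piece_mindeg hS ha
  have h2 : ({y, z} : Finset VG) ⊆ (G.neighborFinset a).filter (· ∉ S) := by
    intro w hw
    rcases mem_insert.mp hw with rfl | hw
    · exact mem_filter.mpr ⟨(mem_neighborFinset ..).mpr hay, hy⟩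
    · rw [mem_singleton.mp hw]; exact mem_filter.mpr ⟨(mem_neighborFinset ..).mpr haz, hz⟩
  have h2' : 2 ≤ ((G.neighborFinset a).filter (· ∉ S)).card := by
    calc 2 = ({y, z} : Finset VG).card := by rw [card_insert_of_notMem (by simpa), card_singleton]
    _ ≤ _ := Finset.card_le_card h2
  have := Finset.card_filter_add_card_filter_not (s := G.neighborFinset a)
    (p := fun b => b ∈ S)
  omega

lemma triangle_internal (hG3 : ∀ v, G.degree v = 3) {x y z : VG}
    (hxy : G.Adj x y) (hyz : G.Adj y z) (hxz : G.Adj x z) :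
    ∃ S, D.IsPiece S ∧ x ∈ S ∧ y ∈ S := by
  obtain ⟨Sx, hSx, hxSx⟩ := D.exists_piece x
  obtain ⟨Sy, hSy, hySy⟩ := D.exists_piece y
  by_cases hy : y ∈ Sx
  · exact ⟨Sx, hSx, hxSx, hy⟩
  by_cases hx : x ∈ Sy
  · exact ⟨Sy, hSy, hx, hySy⟩
  -- z must be in both Sx and Sy, contradiction
  have hzx : z ∈ Sx := by
    by_contra hzx
    exact hyz.ne (D.ext_unique hG3 hSx hxSx hy hzx hxy hxz)
  have hzy : z ∈ Sy := by
    by_contra hzy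
    exact (G.irrefl (((D.ext_unique hG3 hSy hySy hx hzy hxy.symm hyz) ▸ hxz : G.Adj z z)))
  have : Sx = Sy := D.piece_eq_of_mem hSx hSy hzx hzy
  exact absurd (this ▸ hxSx) hx

/-- An edge is internal if both its endpoints lie in a common piece. -/
def Internal (f : Sym2 VG) : Prop := ∃ S, D.IsPiece S ∧ ∀ v ∈ f, v ∈ S

lemma X_eq (hG3 : ∀ v, G.degree v = 3) {X : Set (Sym2 VG)}
    (hX : X = {f | f ∈ G.edgeSet ∧ ¬ ∃ x y z : VG,
      G.Adj x y ∧ G.Adj y z ∧ G.Adj x z ∧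
      f ∈ ({s(x, y), s(y, z), s(x, z)} : Set (Sym2 VG))}) :
    X = {f | f ∈ G.edgeSet ∧ ¬ D.Internal f} := by
  rw [hX]
  ext f
  induction f with
  | _ a b =>
    simp only [Set.mem_setOf_eq]
    refine and_congr_right fun hfE => not_congr ?_
    constructor
    · rintro ⟨x, y, z, hxy, hyz, hxz, hf⟩
      rcases hf with hf | hf | hf
      · obtain ⟨S, hS, h1, h2⟩ := D.triangle_internal hG3 hxy hyz hxz
        refine ⟨S, hS, ?_⟩
        intro v hv
        rw [hf] at hv
        rcases Sym2.mem_iff.mp hv with rfl | rfl <;> assumption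
      · obtain ⟨S, hS, h1, h2⟩ := D.triangle_internal hG3 hyz hxz.symm hxy.symm
        refine ⟨S, hS, ?_⟩
        intro v hv
        rw [hf] at hv
        rcases Sym2.mem_iff.mp hv with rfl | rfl <;> assumption
      · obtain ⟨S, hS, h1, h2⟩ := D.triangle_internal hG3 hxz hyz.symm hxy
        refine ⟨S, hS, ?_⟩
        intro v hv
        rw [hf] at hv
        rcases Sym2.mem_iff.mp hv with rfl | rfl <;> assumption
    · rintro ⟨S, hS, hm⟩
      have hab : G.Adj a b := G.mem_edgeSet.mp hfE
      obtain ⟨z, hzS, haz, hbz⟩ := D.piece_edge_triangle hS (hm a (Sym2.mem_mk_left a b))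
        (hm b (Sym2.mem_mk_right a b)) hab
      exact ⟨a, b, z, hab, hbz, haz, Set.mem_insert _ _⟩

lemma Gr_adj_mem (hG3 : ∀ v, G.degree v = 3) {X : Set (Sym2 VG)}
    (hX : X = {f | f ∈ G.edgeSet ∧ ¬ ∃ x y z : VG,
      G.Adj x y ∧ G.Adj y z ∧ G.Adj x z ∧
      f ∈ ({s(x, y), s(y, z), s(x, z)} : Set (Sym2 VG))})
    {S : Finset VG} (hS : D.IsPiece S) {a b : VG} (ha : a ∈ S)
    (h : (G.deleteEdges X).Adj a b) : b ∈ S := by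
  rw [SimpleGraph.deleteEdges_adj] at h
  obtain ⟨hab, hnX⟩ := h
  have hfE : s(a, b) ∈ G.edgeSet := G.mem_edgeSet.mpr hab
  have hint : D.Internal s(a, b) := by
    by_contra hni
    exact hnX (by rw [D.X_eq hG3 hX]; exact ⟨hfE, hni⟩)
  obtain ⟨S', hS', hm⟩ := hint
  have := D.piece_eq_of_mem hS hS' ha (hm a (Sym2.mem_mk_left a b))
  rw [this]
  exact hm b (Sym2.mem_mk_right a b)

lemma adj_Gr (hG3 : ∀ v, G.degree v = 3) {X : Set (Sym2 VG)}
    (hX : X = {f | f ∈ G.edgeSet ∧ ¬ ∃ x y z : VG,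
      G.Adj x y ∧ G.Adj y z ∧ G.Adj x z ∧
      f ∈ ({s(x, y), s(y, z), s(x, z)} : Set (Sym2 VG))})
    {S : Finset VG} (hS : D.IsPiece S) {a b : VG} (ha : a ∈ S) (hb : b ∈ S)
    (hab : G.Adj a b) : (G.deleteEdges X).Adj a b := by
  rw [SimpleGraph.deleteEdges_adj]
  refine ⟨hab, fun hmem => ?_⟩
  rw [D.X_eq hG3 hX] at hmem
  refine hmem.2 ⟨S, hS, ?_⟩
  intro v hv
  rcases Sym2.mem_iff.mp hv with rfl | rfl <;> assumption

lemma supp_eq (hG3 : ∀ v, G.degree v = 3) {X : Set (Sym2 VG)}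
    (hX : X = {f | f ∈ G.edgeSet ∧ ¬ ∃ x y z : VG,
      G.Adj x y ∧ G.Adj y z ∧ G.Adj x z ∧
      f ∈ ({s(x, y), s(y, z), s(x, z)} : Set (Sym2 VG))})
    {S : Finset VG} (hS : D.IsPiece S) {a : VG} (ha : a ∈ S) :
    ((G.deleteEdges X).connectedComponentMk a).supp = ↑S := by
  have key : ∀ ⦃v w : VG⦄, (G.deleteEdges X).Walk v w → v ∈ S → w ∈ S := by
    intro v w p
    induction p with
    | nil => exact id
    | cons h _ ih => exact fun hv => ih (D.Gr_adj_mem hG3 hX hS hv h)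
  ext v
  rw [SimpleGraph.ConnectedComponent.mem_supp_iff]
  constructor
  · intro h
    have hr : (G.deleteEdges X).Reachable a v :=
      (SimpleGraph.ConnectedComponent.eq.mp h).symm
    obtain ⟨p⟩ := hr
    exact key p ha
  · intro hv
    refine SimpleGraph.ConnectedComponent.eq.mpr ?_
    by_cases hva : v = a
    · rw [hva]
    rcases D.piece_conn hS (by exact_mod_cast hv) ha hva with h | ⟨z, hz, h1, h2⟩
    · exact (D.adj_Gr hG3 hX hS (by exact_mod_cast hv) ha h).reachable
    · exact ((D.adj_Gr hG3 hX hS (by exact_mod_cast hv) hz h1).reachable).trans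
        (D.adj_Gr hG3 hX hS hz ha h2).reachable

lemma comp_edges (hG3 : ∀ v, G.degree v = 3) {X : Set (Sym2 VG)}
    (hX : X = {f | f ∈ G.edgeSet ∧ ¬ ∃ x y z : VG,
      G.Adj x y ∧ G.Adj y z ∧ G.Adj x z ∧
      f ∈ ({s(x, y), s(y, z), s(x, z)} : Set (Sym2 VG))})
    {S : Finset VG} (hS : D.IsPiece S) {a : VG} (ha : a ∈ S) :
    {e | e ∈ (G.deleteEdges X).edgeSet ∧ ∀ v ∈ e,
        (G.deleteEdges X).connectedComponentMk v = (G.deleteEdges X).connectedComponentMk a}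
      = {f | f ∈ G.edgeSet ∧ ∀ v ∈ f, v ∈ (↑S : Set VG)} := by
  ext f
  simp only [Set.mem_setOf_eq]
  constructor
  · rintro ⟨hfE, hc⟩
    rw [SimpleGraph.edgeSet_deleteEdges] at hfE
    refine ⟨hfE.1, fun v hv => ?_⟩
    have := hc v hv
    have hsupp : v ∈ ((G.deleteEdges X).connectedComponentMk a).supp :=
      SimpleGraph.ConnectedComponent.mem_supp_iff _ _ |>.mpr this
    rw [D.supp_eq hG3 hX hS ha] at hsupp
    exact hsupp
  · rintro ⟨hfE, hm⟩
    constructor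
    · rw [SimpleGraph.edgeSet_deleteEdges]
      refine ⟨hfE, fun hmem => ?_⟩
      rw [D.X_eq hG3 hX] at hmem
      exact hmem.2 ⟨S, hS, fun v hv => by exact_mod_cast hm v hv⟩
    · intro v hv
      have : v ∈ ((G.deleteEdges X).connectedComponentMk a).supp := by
        rw [D.supp_eq hG3 hX hS ha]
        exact hm v hv
      exact SimpleGraph.ConnectedComponent.mem_supp_iff _ _ |>.mp this

lemma betti_tri (hG3 : ∀ v, G.degree v = 3) {X : Set (Sym2 VG)}
    (hX : X = {f | f ∈ G.edgeSet ∧ ¬ ∃ x y z : VG,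
      G.Adj x y ∧ G.Adj y z ∧ G.Adj x z ∧
      f ∈ ({s(x, y), s(y, z), s(x, z)} : Set (Sym2 VG))})
    {u : VH} {a : VG} (ha : a ∈ D.tri u) :
    compBetti (G.deleteEdges X) ((G.deleteEdges X).connectedComponentMk a) = 1 := by
  have hP : D.IsPiece (D.tri u) := Or.inl ⟨u, rfl⟩
  have hedges : {e | e ∈ (G.deleteEdges X).edgeSet ∧ ∀ v ∈ e,
      (G.deleteEdges X).connectedComponentMk v = (G.deleteEdges X).connectedComponentMk a}.ncard
      = 3 := by
    rw [D.comp_edges hG3 hX hP ha, pair_set_eq, Set.ncard_coe_finset]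
    have hfull : ((D.tri u).offDiag.image Sym2.mk.uncurry).filter (· ∈ G.edgeSet)
        = (D.tri u).offDiag.image Sym2.mk.uncurry := by
      refine Finset.filter_eq_self.mpr ?_
      intro f hf
      obtain ⟨⟨x, y⟩, hxy, rfl⟩ := Finset.mem_image.mp hf
      rw [Finset.mem_offDiag] at hxy
      exact G.mem_edgeSet.mpr (D.tri_adj u x hxy.1 y hxy.2.1 hxy.2.2)
    rw [hfull, Sym2.card_image_offDiag, D.tri_card]
    decide
  have hsupp : ((G.deleteEdges X).connectedComponentMk a).supp.ncard = 3 := by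
    rw [D.supp_eq hG3 hX hP ha, Set.ncard_coe_finset, D.tri_card]
  unfold compBetti
  rw [hedges, hsupp]
  norm_num

lemma betti_dia (hG3 : ∀ v, G.degree v = 3) {X : Set (Sym2 VG)}
    (hX : X = {f | f ∈ G.edgeSet ∧ ¬ ∃ x y z : VG,
      G.Adj x y ∧ G.Adj y z ∧ G.Adj x z ∧
      f ∈ ({s(x, y), s(y, z), s(x, z)} : Set (Sym2 VG))})
    {e : Sym2 VH} (he : e ∈ H.edgeSet) {i : ℕ} (hi : i < k e) {a : VG} (ha : a ∈ D.dia e i) :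
    compBetti (G.deleteEdges X) ((G.deleteEdges X).connectedComponentMk a) = 2 := by
  have hP : D.IsPiece (D.dia e i) := Or.inr ⟨e, he, i, hi, rfl⟩
  have hedges : {f | f ∈ (G.deleteEdges X).edgeSet ∧ ∀ v ∈ f,
      (G.deleteEdges X).connectedComponentMk v = (G.deleteEdges X).connectedComponentMk a}.ncard
      = 5 := by
    rw [D.comp_edges hG3 hX hP ha]
    exact D.dia_edges e he i hi
  have hsupp : ((G.deleteEdges X).connectedComponentMk a).supp.ncard = 4 := by
    rw [D.supp_eq hG3 hX hP ha, Set.ncard_coe_finset, D.dia_card e he i hi]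
  unfold compBetti
  rw [hedges, hsupp]
  norm_num

lemma mem_pairs_iff {S : Finset VG} {f : Sym2 VG} :
    f ∈ ((S.offDiag.image Sym2.mk.uncurry).filter (· ∈ G.edgeSet)) ↔
      f ∈ G.edgeSet ∧ ∀ v ∈ f, v ∈ S := by
  have h := Set.ext_iff.mp (pair_set_eq G S) f
  simpa using h.symm

lemma pairs_disjoint {S S' : Finset VG} (h : Disjoint S S') :
    Disjoint (S.offDiag.image Sym2.mk.uncurry) (S'.offDiag.image Sym2.mk.uncurry) := by
  rw [Finset.disjoint_left]
  rintro f hf hf'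
  obtain ⟨⟨x, y⟩, hxy, rfl⟩ := Finset.mem_image.mp hf
  obtain ⟨⟨x', y'⟩, hxy', heq⟩ := Finset.mem_image.mp hf'
  rw [Finset.mem_offDiag] at hxy hxy'
  have hxS' : x ∈ S' := by
    rcases Sym2.eq_iff.mp (show s(x', y') = s(x, y) from heq) with ⟨h1, h2⟩ | ⟨h1, h2⟩
    · rw [← h1]; exact hxy'.1
    · rw [← h2]; exact hxy'.2.1
  exact Finset.disjoint_left.mp h hxy.1 hxS'

lemma tri_pairs_card (u : VH) :
    (((D.tri u).offDiag.image Sym2.mk.uncurry).filter (· ∈ G.edgeSet)).card = 3 := by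
  have hfull : ((D.tri u).offDiag.image Sym2.mk.uncurry).filter (· ∈ G.edgeSet)
      = (D.tri u).offDiag.image Sym2.mk.uncurry := by
    refine Finset.filter_eq_self.mpr ?_
    intro f hf
    obtain ⟨⟨x, y⟩, hxy, rfl⟩ := Finset.mem_image.mp hf
    rw [Finset.mem_offDiag] at hxy
    exact G.mem_edgeSet.mpr (D.tri_adj u x hxy.1 y hxy.2.1 hxy.2.2)
  rw [hfull, Sym2.card_image_offDiag, D.tri_card]
  decide

lemma dia_pairs_card {e : Sym2 VH} (he : e ∈ H.edgeSet) {i : ℕ} (hi : i < k e) :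
    (((D.dia e i).offDiag.image Sym2.mk.uncurry).filter (· ∈ G.edgeSet)).card = 5 := by
  have h := D.dia_edges e he i hi
  rw [pair_set_eq, Set.ncard_coe_finset] at h
  exact h

include D in
lemma card_VG [DecidableRel H.Adj] :
    Fintype.card VG = 3 * Fintype.card VH + 4 * ∑ e ∈ H.edgeFinset, k e := by
  set T := H.edgeFinset.sigma (fun e => Finset.range (k e)) with hT
  have hmemT : ∀ p : (_ : Sym2 VH) × ℕ, p ∈ T ↔ p.1 ∈ H.edgeSet ∧ p.2 < k p.1 := by
    intro p; rw [hT, Finset.mem_sigma, SimpleGraph.mem_edgeFinset, Finset.mem_range]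
  set A := (univ : Finset VH).biUnion (fun u => D.tri u) with hA
  set B := T.biUnion (fun p => D.dia p.1 p.2) with hB
  have hcover : (univ : Finset VG) = A ∪ B := by
    ext x
    simp only [mem_univ, true_iff, mem_union]
    rcases D.pieces_cover x with ⟨u, hu⟩ | ⟨e, he, i, hi, hd⟩
    · exact Or.inl (mem_biUnion.mpr ⟨u, mem_univ u, hu⟩)
    · exact Or.inr (mem_biUnion.mpr ⟨⟨e, i⟩, (hmemT ⟨e, i⟩).mpr ⟨he, hi⟩, hd⟩)
  have hdisj : Disjoint A B := by
    rw [Finset.disjoint_left]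
    intro x hxA hxB
    obtain ⟨u, -, hu⟩ := mem_biUnion.mp hxA
    obtain ⟨p, hp, hx⟩ := mem_biUnion.mp hxB
    obtain ⟨he, hi⟩ := (hmemT p).mp hp
    exact Finset.disjoint_left.mp (D.tri_dia_disj u p.1 he p.2 hi) hu hx
  have hcardA : A.card = 3 * Fintype.card VH := by
    rw [hA, card_biUnion (fun u _ u' _ h => D.tri_disj u u' h)]
    rw [Finset.sum_congr rfl (fun u _ => D.tri_card u), Finset.sum_const, card_univ,
      smul_eq_mul, mul_comm]
  have hcardB : B.card = 4 * ∑ e ∈ H.edgeFinset, k e := by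
    rw [hB, card_biUnion]
    · rw [Finset.sum_congr rfl
        (fun p hp => D.dia_card p.1 ((hmemT p).mp hp).1 p.2 ((hmemT p).mp hp).2),
        Finset.sum_const, smul_eq_mul, mul_comm, hT, Finset.card_sigma]
      congr 1
      exact Finset.sum_congr rfl fun e _ => Finset.card_range (k e)
    · rintro ⟨e, i⟩ hp ⟨e', i'⟩ hq hpq
      obtain ⟨he, hi⟩ := (hmemT ⟨e, i⟩).mp hp
      obtain ⟨he', hi'⟩ := (hmemT ⟨e', i'⟩).mp hq
      refine D.dia_disj e he e' he' i hi i' hi' ?_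
      by_contra hc
      push_neg at hc
      obtain ⟨rfl, rfl⟩ := hc
      exact hpq rfl
  rw [← Finset.card_univ, hcover, Finset.card_union_of_disjoint hdisj, hcardA, hcardB]

include D in
lemma card_internal [DecidableRel H.Adj] :
    {f | f ∈ G.edgeSet ∧ D.Internal f}.ncard
      = 3 * Fintype.card VH + 5 * ∑ e ∈ H.edgeFinset, k e := by
  set T := H.edgeFinset.sigma (fun e => Finset.range (k e)) with hT
  have hmemT : ∀ p : (_ : Sym2 VH) × ℕ, p ∈ T ↔ p.1 ∈ H.edgeSet ∧ p.2 < k p.1 := by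
    intro p; rw [hT, Finset.mem_sigma, SimpleGraph.mem_edgeFinset, Finset.mem_range]
  set AE := (univ : Finset VH).biUnion
    (fun u => ((D.tri u).offDiag.image Sym2.mk.uncurry).filter (· ∈ G.edgeSet)) with hAE
  set BE := T.biUnion
    (fun p => ((D.dia p.1 p.2).offDiag.image Sym2.mk.uncurry).filter (· ∈ G.edgeSet)) with hBE
  have hset : {f | f ∈ G.edgeSet ∧ D.Internal f} = ↑(AE ∪ BE) := by
    ext f
    simp only [Set.mem_setOf_eq, coe_union, Set.mem_union, mem_coe, hAE, hBE, mem_biUnion]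
    constructor
    · rintro ⟨hfE, S, hS, hm⟩
      rcases hS with ⟨u, rfl⟩ | ⟨e, he, i, hi, rfl⟩
      · exact Or.inl ⟨u, mem_univ u, mem_pairs_iff.mpr ⟨hfE, hm⟩⟩
      · exact Or.inr ⟨⟨e, i⟩, (hmemT ⟨e, i⟩).mpr ⟨he, hi⟩, mem_pairs_iff.mpr ⟨hfE, hm⟩⟩
    · rintro (⟨u, -, hf⟩ | ⟨p, hp, hf⟩)
      · obtain ⟨hfE, hm⟩ := mem_pairs_iff.mp hf
        exact ⟨hfE, D.tri u, Or.inl ⟨u, rfl⟩, hm⟩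
      · obtain ⟨hfE, hm⟩ := mem_pairs_iff.mp hf
        obtain ⟨he, hi⟩ := (hmemT p).mp hp
        exact ⟨hfE, D.dia p.1 p.2, Or.inr ⟨p.1, he, p.2, hi, rfl⟩, hm⟩
  have hdisj : Disjoint AE BE := by
    rw [Finset.disjoint_left]
    intro f hfA hfB
    obtain ⟨u, -, hf⟩ := mem_biUnion.mp hfA
    obtain ⟨p, hp, hf'⟩ := mem_biUnion.mp hfB
    obtain ⟨he, hi⟩ := (hmemT p).mp hp
    exact Finset.disjoint_left.mp (pairs_disjoint (D.tri_dia_disj u p.1 he p.2 hi))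
      (Finset.mem_of_mem_filter f hf) (Finset.mem_of_mem_filter f hf')
  have hcardA : AE.card = 3 * Fintype.card VH := by
    rw [hAE, card_biUnion]
    · rw [Finset.sum_congr rfl (fun u _ => D.tri_pairs_card u), Finset.sum_const, card_univ,
        smul_eq_mul, mul_comm]
    · intro u _ u' _ h
      exact Finset.disjoint_filter_filter (pairs_disjoint (D.tri_disj u u' h))
  have hcardB : BE.card = 5 * ∑ e ∈ H.edgeFinset, k e := by
    rw [hBE, card_biUnion]
    · rw [Finset.sum_congr rfl
        (fun p hp => D.dia_pairs_card ((hmemT p).mp hp).1 ((hmemT p).mp hp).2),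
        Finset.sum_const, smul_eq_mul, mul_comm, hT, Finset.card_sigma]
      congr 1
      exact Finset.sum_congr rfl fun e _ => Finset.card_range (k e)
    · rintro ⟨e, i⟩ hp ⟨e', i'⟩ hq hpq
      obtain ⟨he, hi⟩ := (hmemT ⟨e, i⟩).mp hp
      obtain ⟨he', hi'⟩ := (hmemT ⟨e', i'⟩).mp hq
      refine Finset.disjoint_filter_filter (pairs_disjoint
        (D.dia_disj e he e' he' i hi i' hi' ?_))
      by_contra hc
      push_neg at hc
      obtain ⟨rfl, rfl⟩ := hc
      exact hpq rfl
  rw [hset, Set.ncard_coe_finset, Finset.card_union_of_disjoint hdisj, hcardA, hcardB]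

include D in
lemma two_card_X (hG3 : ∀ v, G.degree v = 3) [DecidableRel H.Adj] {X : Set (Sym2 VG)}
    (hX : X = {f | f ∈ G.edgeSet ∧ ¬ ∃ x y z : VG,
      G.Adj x y ∧ G.Adj y z ∧ G.Adj x z ∧
      f ∈ ({s(x, y), s(y, z), s(x, z)} : Set (Sym2 VG))}) :
    2 * X.ncard = 3 * Fintype.card VH + 2 * ∑ e ∈ H.edgeFinset, k e := by
  have hd : Disjoint {f | f ∈ G.edgeSet ∧ ¬ D.Internal f} {f | f ∈ G.edgeSet ∧ D.Internal f} := by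
    rw [Set.disjoint_left]
    rintro f ⟨-, h⟩ ⟨-, h'⟩
    exact h h'
  have hu : {f | f ∈ G.edgeSet ∧ ¬ D.Internal f} ∪ {f | f ∈ G.edgeSet ∧ D.Internal f}
      = G.edgeSet := by
    ext f
    constructor
    · rintro (⟨h, -⟩ | ⟨h, -⟩) <;> exact h
    · intro h
      by_cases hI : D.Internal f
      · exact Or.inr ⟨h, hI⟩
      · exact Or.inl ⟨h, hI⟩
  have h1 : G.edgeSet.ncard = X.ncard + {f | f ∈ G.edgeSet ∧ D.Internal f}.ncard := by
    rw [D.X_eq hG3 hX]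
    conv_lhs => rw [← hu]
    exact Set.ncard_union_eq hd (Set.toFinite _) (Set.toFinite _)
  have h2 : G.edgeSet.ncard = G.edgeFinset.card := by
    rw [← Set.ncard_coe_finset G.edgeFinset, SimpleGraph.coe_edgeFinset]
  have h3 : ∑ v, G.degree v = 2 * G.edgeFinset.card := G.sum_degrees_eq_twice_card_edges
  have h4 : ∑ v : VG, G.degree v = 3 * Fintype.card VG := by
    rw [Finset.sum_congr rfl (fun v _ => hG3 v), Finset.sum_const, card_univ, smul_eq_mul,
      mul_comm]
  have h5 := D.card_VG
  have h6 := D.card_internal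
  omega

end DiamondInflation
end Main

/-- For a connected cubic graph `G` obtained from a 2-edge-connected cubic graph `H` on
`n` vertices by inflating every vertex to a triangle and replacing each edge by a string
of diamonds, with `X` the set of edges of `G` lying on no triangle: the number of
cyclically odd components of `G − X` equals `n`, and `ec(G − X) − |X| = −3n/2`
(written as `2·ec(G − X) − 2|X| = −3n`). -/
theorem stmt14 {VH VG : Type*} [Fintype VH] [Fintype VG]
    [DecidableEq VH] [DecidableEq VG]
    (H : SimpleGraph VH) (G : SimpleGraph VG)
    [DecidableRel H.Adj] [DecidableRel G.Adj]
    (hHconn : H.Connected) (hHcubic : ∀ v, H.degree v = 3)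
    (hH2ec : ∀ f ∈ H.edgeFinset, (H.deleteEdges {f}).Connected)
    (hGconn : G.Connected) (hGcubic : ∀ v, G.degree v = 3)
    (k : Sym2 VH → ℕ) (D : DiamondInflation H G k)
    (X : Set (Sym2 VG))
    (hX : X = {f | f ∈ G.edgeSet ∧ ¬ ∃ x y z : VG,
      G.Adj x y ∧ G.Adj y z ∧ G.Adj x z ∧
      f ∈ ({s(x, y), s(y, z), s(x, z)} : Set (Sym2 VG))}) :
    {c : (G.deleteEdges X).ConnectedComponent |
        Odd (compBetti (G.deleteEdges X) c)}.ncard = Fintype.card VH ∧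
    2 * ({c : (G.deleteEdges X).ConnectedComponent |
        Even (compBetti (G.deleteEdges X) c)}.ncard : ℤ) - 2 * (X.ncard : ℤ)
      = -3 * (Fintype.card VH : ℤ) := by
  haveI : Nonempty VH := hHconn.nonempty
  classical
  have htne : ∀ u, (D.tri u).Nonempty := fun u =>
    Finset.card_pos.mp (by rw [D.tri_card]; omega)
  set pick : VH → VG := fun u => (htne u).choose with hpickdef
  have hpick : ∀ u, pick u ∈ D.tri u := fun u => (htne u).choose_spec
  set Gr := G.deleteEdges X with hGr
  have hodd : {c : Gr.ConnectedComponent | Odd (compBetti Gr c)}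
      = Set.range (fun u => Gr.connectedComponentMk (pick u)) := by
    ext c
    simp only [Set.mem_setOf_eq, Set.mem_range]
    constructor
    · intro hc
      obtain ⟨a, rfl⟩ := c.exists_rep
      obtain ⟨S, hS, haS⟩ := D.exists_piece a
      rcases hS with ⟨u, rfl⟩ | ⟨e, he, i, hi, rfl⟩
      · refine ⟨u, ?_⟩
        have hmem : pick u ∈ (Gr.connectedComponentMk a).supp := by
          rw [hGr, D.supp_eq hGcubic hX (Or.inl ⟨u, rfl⟩) haS]
          exact_mod_cast hpick u
        exact (SimpleGraph.ConnectedComponent.mem_supp_iff _ _).mp hmem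
      · exfalso
        have hc' : Odd (compBetti (G.deleteEdges X)
            ((G.deleteEdges X).connectedComponentMk a)) := hc
        rw [D.betti_dia hGcubic hX he hi haS] at hc'
        obtain ⟨m, hm⟩ := hc'
        omega
    · rintro ⟨u, rfl⟩
      rw [hGr, D.betti_tri hGcubic hX (hpick u)]
      exact odd_one
  have hoddcard : {c : Gr.ConnectedComponent | Odd (compBetti Gr c)}.ncard
      = Fintype.card VH := by
    have hinj : Function.Injective (fun u => Gr.connectedComponentMk (pick u)) := by
      intro u u' h
      by_contra hne
      have h1 : pick u ∈ (Gr.connectedComponentMk (pick u')).supp :=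
        (SimpleGraph.ConnectedComponent.mem_supp_iff _ _).mpr h
      rw [hGr, D.supp_eq hGcubic hX (Or.inl ⟨u', rfl⟩) (hpick u')] at h1
      exact Finset.disjoint_left.mp (D.tri_disj u u' hne) (hpick u) (by exact_mod_cast h1)
    rw [hodd, ← Set.image_univ, Set.ncard_image_of_injective _ hinj, Set.ncard_univ,
      Nat.card_eq_fintype_card]
  set T := H.edgeFinset.sigma (fun e => Finset.range (k e)) with hT
  have hmemT : ∀ p : (_ : Sym2 VH) × ℕ, p ∈ T ↔ p.1 ∈ H.edgeSet ∧ p.2 < k p.1 := by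
    intro p; rw [hT, Finset.mem_sigma, SimpleGraph.mem_edgeFinset, Finset.mem_range]
  have hdne : ∀ p, p ∈ T → (D.dia p.1 p.2).Nonempty := fun p hp =>
    Finset.card_pos.mp
      (by rw [D.dia_card p.1 ((hmemT p).mp hp).1 p.2 ((hmemT p).mp hp).2]; omega)
  set pickD : (_ : Sym2 VH) × ℕ → VG := fun p =>
    if h : (D.dia p.1 p.2).Nonempty then h.choose else pick (Classical.arbitrary VH)
    with hpickDdef
  have hpickD : ∀ p ∈ T, pickD p ∈ D.dia p.1 p.2 := by
    intro p hp
    rw [hpickDdef]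
    simp only [dif_pos (hdne p hp)]
    exact (hdne p hp).choose_spec
  have heven : {c : Gr.ConnectedComponent | Even (compBetti Gr c)}
      = (fun p => Gr.connectedComponentMk (pickD p)) '' ↑T := by
    ext c
    simp only [Set.mem_setOf_eq, Set.mem_image, Finset.mem_coe]
    constructor
    · intro hc
      obtain ⟨a, rfl⟩ := c.exists_rep
      obtain ⟨S, hS, haS⟩ := D.exists_piece a
      rcases hS with ⟨u, rfl⟩ | ⟨e, he, i, hi, rfl⟩
      · exfalso
        have hc' : Even (compBetti (G.deleteEdges X)
            ((G.deleteEdges X).connectedComponentMk a)) := hc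
        rw [D.betti_tri hGcubic hX haS] at hc'
        obtain ⟨m, hm⟩ := hc'
        omega
      · have hpT : (⟨e, i⟩ : (_ : Sym2 VH) × ℕ) ∈ T := (hmemT ⟨e, i⟩).mpr ⟨he, hi⟩
        refine ⟨⟨e, i⟩, hpT, ?_⟩
        have hmem : pickD ⟨e, i⟩ ∈ (Gr.connectedComponentMk a).supp := by
          rw [hGr, D.supp_eq hGcubic hX (Or.inr ⟨e, he, i, hi, rfl⟩) haS]
          exact_mod_cast hpickD ⟨e, i⟩ hpT
        exact (SimpleGraph.ConnectedComponent.mem_supp_iff _ _).mp hmem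
    · rintro ⟨p, hp, rfl⟩
      obtain ⟨he, hi⟩ := (hmemT p).mp hp
      rw [hGr, D.betti_dia hGcubic hX he hi (hpickD p hp)]
      exact ⟨1, by ring⟩
  have hevencard : {c : Gr.ConnectedComponent | Even (compBetti Gr c)}.ncard
      = ∑ e ∈ H.edgeFinset, k e := by
    have hinj : Set.InjOn (fun p => Gr.connectedComponentMk (pickD p)) ↑T := by
      rintro ⟨e, i⟩ hp ⟨e', i'⟩ hq h
      have hp' : (⟨e, i⟩ : (_ : Sym2 VH) × ℕ) ∈ T := by exact_mod_cast hp
      have hq' : (⟨e', i'⟩ : (_ : Sym2 VH) × ℕ) ∈ T := by exact_mod_cast hq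
      obtain ⟨he, hi⟩ := (hmemT ⟨e, i⟩).mp hp'
      obtain ⟨he', hi'⟩ := (hmemT ⟨e', i'⟩).mp hq'
      by_contra hne
      have h1 : pickD ⟨e, i⟩ ∈ (Gr.connectedComponentMk (pickD ⟨e', i'⟩)).supp :=
        (SimpleGraph.ConnectedComponent.mem_supp_iff _ _).mpr h
      rw [hGr, D.supp_eq hGcubic hX (Or.inr ⟨e', he', i', hi', rfl⟩) (hpickD _ hq')] at h1
      refine Finset.disjoint_left.mp (D.dia_disj e he e' he' i hi i' hi' ?_)
        (hpickD _ hp') (by exact_mod_cast h1)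
      by_contra hc
      push_neg at hc
      obtain ⟨rfl, rfl⟩ := hc
      exact hne rfl
    rw [heven, Set.ncard_image_of_injOn hinj, Set.ncard_coe_finset, hT, Finset.card_sigma]
    exact Finset.sum_congr rfl fun e _ => Finset.card_range (k e)
  have h2X := D.two_card_X hGcubic hX
  refine ⟨hoddcard, ?_⟩
  rw [hevencard]
  have hx' : (2 : ℤ) * X.ncard
      = 3 * Fintype.card VH + 2 * ∑ e ∈ H.edgeFinset, k e := by
    exact_mod_cast congrArg (fun m : ℕ => (m : ℤ)) h2X
  push_cast at hx' ⊢
  linarith
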